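/- Correctness of normalization for RLC: for every term Γ ⊢ t : A of RLC there exists a normal form n with Γ ⊢nf n : A such that Γ ⊢ t ≡ n : A in the equational theory of RLC (viewing the normal form as a term via the evident embedding). -/

import Mathlib

/-- Types of RLC: base, unit, products, functions and the modal type ◇. -/
inductive Ty : Type
  | base : Ty
  | unit : Ty
  | prod : Ty → Ty → Ty
  | arr : Ty → Ty → Ty
  | dia : Ty → Ty

/-- Typing contexts (de Bruijn; the head is the most recently bound variable). -/
abbrev Ctx := List Ty

/-- Raw terms of RLC with de Bruijn indices. -/
inductive Tm : Type
  | var : ℕ → Tm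
  | unit : Tm
  | pair : Tm → Tm → Tm
  | fst : Tm → Tm
  | snd : Tm → Tm
  | lam : Tm → Tm
  | app : Tm → Tm → Tm
  | ret : Tm → Tm                 -- return t
  | lett : Tm → Tm → Tm           -- let x = t in u (letmap)

/-- Lifting of a renaming under a binder. -/
def liftRen (ρ : ℕ → ℕ) : ℕ → ℕ
  | 0 => 0
  | n + 1 => ρ n + 1

/-- Renaming of the variables of a term. -/
def rename (ρ : ℕ → ℕ) : Tm → Tm
  | .var n => .var (ρ n)
  | .unit => .unit
  | .pair t u => .pair (rename ρ t) (rename ρ u)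
  | .fst t => .fst (rename ρ t)
  | .snd t => .snd (rename ρ t)
  | .lam t => .lam (rename (liftRen ρ) t)
  | .app t u => .app (rename ρ t) (rename ρ u)
  | .ret t => .ret (rename ρ t)
  | .lett t u => .lett (rename ρ t) (rename (liftRen ρ) u)

/-- Capture-avoiding substitution of `u` for the variable `k`. -/
def subst (k : ℕ) (u : Tm) : Tm → Tm
  | .var n => if n < k then .var n else if n = k then rename (· + k) u else .var (n - 1)
  | .unit => .unit
  | .pair t t' => .pair (subst k u t) (subst k u t')
  | .fst t => .fst (subst k u t)
  | .snd t => .snd (subst k u t)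
  | .lam t => .lam (subst (k + 1) u t)
  | .app t t' => .app (subst k u t) (subst k u t')
  | .ret t => .ret (subst k u t)
  | .lett t t' => .lett (subst k u t) (subst (k + 1) u t')

/-- The typing judgment `Γ ⊢ t : A` of RLC, with the return and letmap rules. -/
inductive HasTy : Ctx → Tm → Ty → Prop
  | var {Γ n A} : Γ[n]? = some A → HasTy Γ (.var n) A
  | unit {Γ} : HasTy Γ .unit .unit
  | pair {Γ t u A B} : HasTy Γ t A → HasTy Γ u B → HasTy Γ (.pair t u) (.prod A B)
  | fst {Γ t A B} : HasTy Γ t (.prod A B) → HasTy Γ (.fst t) A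
  | snd {Γ t A B} : HasTy Γ t (.prod A B) → HasTy Γ (.snd t) B
  | lam {Γ t A B} : HasTy (A :: Γ) t B → HasTy Γ (.lam t) (.arr A B)
  | app {Γ t u A B} : HasTy Γ t (.arr A B) → HasTy Γ u A → HasTy Γ (.app t u) B
  | ret {Γ t A} : HasTy Γ t A → HasTy Γ (.ret t) (.dia A)
  | lett {Γ t u A B} : HasTy Γ t (.dia A) → HasTy (A :: Γ) u B →
      HasTy Γ (.lett t u) (.dia B)

/-- The equational theory `Γ ⊢ t ≡ u : A` of RLC: the congruence generated by
⊤-η, ×-β, ×-η, →-β, →-η, ◇-η, ◇-β₁ and ◇-β₂. -/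
inductive EqTm : Ctx → Tm → Tm → Ty → Prop
  | refl {Γ t A} : HasTy Γ t A → EqTm Γ t t A
  | symm {Γ t u A} : EqTm Γ t u A → EqTm Γ u t A
  | trans {Γ t u v A} : EqTm Γ t u A → EqTm Γ u v A → EqTm Γ t v A
  | pair_congr {Γ t t' u u' A B} : EqTm Γ t t' A → EqTm Γ u u' B →
      EqTm Γ (.pair t u) (.pair t' u') (.prod A B)
  | fst_congr {Γ t t' A B} : EqTm Γ t t' (.prod A B) → EqTm Γ (.fst t) (.fst t') A
  | snd_congr {Γ t t' A B} : EqTm Γ t t' (.prod A B) → EqTm Γ (.snd t) (.snd t') B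
  | lam_congr {Γ t t' A B} : EqTm (A :: Γ) t t' B → EqTm Γ (.lam t) (.lam t') (.arr A B)
  | app_congr {Γ t t' u u' A B} : EqTm Γ t t' (.arr A B) → EqTm Γ u u' A →
      EqTm Γ (.app t u) (.app t' u') B
  | ret_congr {Γ t t' A} : EqTm Γ t t' A → EqTm Γ (.ret t) (.ret t') (.dia A)
  | lett_congr {Γ t t' u u' A B} : EqTm Γ t t' (.dia A) → EqTm (A :: Γ) u u' B →
      EqTm Γ (.lett t u) (.lett t' u') (.dia B)
  | unit_eta {Γ t} : HasTy Γ t .unit → EqTm Γ t .unit .unit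
  | prod_beta1 {Γ t u A B} : HasTy Γ t A → HasTy Γ u B →
      EqTm Γ (.fst (.pair t u)) t A
  | prod_beta2 {Γ t u A B} : HasTy Γ t A → HasTy Γ u B →
      EqTm Γ (.snd (.pair t u)) u B
  | prod_eta {Γ t A B} : HasTy Γ t (.prod A B) →
      EqTm Γ t (.pair (.fst t) (.snd t)) (.prod A B)
  | arr_beta {Γ t u A B} : HasTy (A :: Γ) t B → HasTy Γ u A →
      EqTm Γ (.app (.lam t) u) (subst 0 u t) B
  | arr_eta {Γ t A B} : HasTy Γ t (.arr A B) →
      EqTm Γ t (.lam (.app (rename Nat.succ t) (.var 0))) (.arr A B)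
  | dia_eta {Γ t A} : HasTy Γ t (.dia A) →
      EqTm Γ t (.lett t (.var 0)) (.dia A)
  | dia_beta1 {Γ t u u' A B C} : HasTy Γ t (.dia A) → HasTy (A :: Γ) u B →
      HasTy (B :: Γ) u' C →
      EqTm Γ (.lett (.lett t u) u')
        (.lett t (subst 0 u (rename (liftRen Nat.succ) u'))) (.dia C)
  | dia_beta2 {Γ t u A B} : HasTy Γ t A → HasTy (A :: Γ) u B →
      EqTm Γ (.lett (.ret t) u) (.ret (subst 0 t u)) (.dia B)

mutual
  /-- Neutral terms `Γ ⊢ne n : A` of RLC. -/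
  inductive Neu : Ctx → Tm → Ty → Prop
    | var {Γ n A} : Γ[n]? = some A → Neu Γ (.var n) A
    | fst {Γ t A B} : Neu Γ t (.prod A B) → Neu Γ (.fst t) A
    | snd {Γ t A B} : Neu Γ t (.prod A B) → Neu Γ (.snd t) B
    | app {Γ t u A B} : Neu Γ t (.arr A B) → Nf Γ u A → Neu Γ (.app t u) B

  /-- Normal forms `Γ ⊢nf n : A` of RLC. -/
  inductive Nf : Ctx → Tm → Ty → Prop
    | up {Γ t} : Neu Γ t .base → Nf Γ t .base
    | unit {Γ} : Nf Γ .unit .unit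
    | pair {Γ t u A B} : Nf Γ t A → Nf Γ u B → Nf Γ (.pair t u) (.prod A B)
    | lam {Γ t A B} : Nf (A :: Γ) t B → Nf Γ (.lam t) (.arr A B)
    | ret {Γ t A} : Nf Γ t A → Nf Γ (.ret t) (.dia A)
    | lett {Γ t u A B} : Neu Γ t (.dia A) → Nf (A :: Γ) u B →
        Nf Γ (.lett t u) (.dia B)
end

/- ===== Auxiliary development ===== -/

/-- A renaming `ρ` maps context `Γ` into `Γ'`. -/
def GoodRen (ρ : ℕ → ℕ) (Γ Γ' : Ctx) : Prop :=
  ∀ i A, Γ[i]? = some A → Γ'[ρ i]? = some A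

lemma goodRen_lift {ρ : ℕ → ℕ} {Γ Γ' : Ctx} (h : GoodRen ρ Γ Γ') (A : Ty) :
    GoodRen (liftRen ρ) (A :: Γ) (A :: Γ') := by
  intro i B hi
  cases i with
  | zero => simpa [liftRen] using hi
  | succ i => exact h i B hi

lemma goodRen_succ (Γ : Ctx) (A : Ty) : GoodRen Nat.succ Γ (A :: Γ) :=
  fun _ _ h => h

lemma goodRen_add (Γ Δ : Ctx) : GoodRen (· + Δ.length) Γ (Δ ++ Γ) := by
  intro i A hi
  have : Δ.length ≤ i + Δ.length := Nat.le_add_left _ _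
  rw [List.getElem?_append_right this, Nat.add_sub_cancel]
  exact hi

lemma hasTy_rename {ρ : ℕ → ℕ} {Γ Γ' : Ctx} {t : Tm} {A : Ty}
    (h : HasTy Γ t A) (hρ : GoodRen ρ Γ Γ') : HasTy Γ' (rename ρ t) A := by
  induction h generalizing ρ Γ' with
  | var hv => exact .var (hρ _ _ hv)
  | unit => exact .unit
  | pair _ _ ih1 ih2 => exact .pair (ih1 hρ) (ih2 hρ)
  | fst _ ih => exact .fst (ih hρ)
  | snd _ ih => exact .snd (ih hρ)
  | lam _ ih => exact .lam (ih (goodRen_lift hρ _))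
  | app _ _ ih1 ih2 => exact .app (ih1 hρ) (ih2 hρ)
  | ret _ ih => exact .ret (ih hρ)
  | lett _ _ ih1 ih2 => exact .lett (ih1 hρ) (ih2 (goodRen_lift hρ _))

/-- Renaming preserves neutrals and normal forms (combined statement,
by structural induction on the term). -/
lemma rename_neu_nf : ∀ t : Tm,
    (∀ {Γ Γ' : Ctx} {ρ : ℕ → ℕ} {A : Ty}, Neu Γ t A → GoodRen ρ Γ Γ' →
      Neu Γ' (rename ρ t) A) ∧
    (∀ {Γ Γ' : Ctx} {ρ : ℕ → ℕ} {A : Ty}, Nf Γ t A → GoodRen ρ Γ Γ' →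
      Nf Γ' (rename ρ t) A) := by
  intro t
  induction t with
  | var n =>
      refine ⟨fun h hρ => ?_, fun h hρ => ?_⟩
      · cases h with | var hv => exact .var (hρ _ _ hv)
      · cases h with | up h => cases h with | var hv => exact .up (.var (hρ _ _ hv))
  | unit =>
      refine ⟨fun h _ => ?_, fun h _ => ?_⟩
      · cases h
      · cases h with
        | unit => exact .unit
        | up h => cases h
  | pair a b iha ihb =>
      refine ⟨fun h _ => ?_, fun h hρ => ?_⟩
      · cases h
      · cases h with
        | pair ha hb => exact .pair (iha.2 ha hρ) (ihb.2 hb hρ)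
        | up h => cases h
  | fst a iha =>
      refine ⟨fun h hρ => ?_, fun h hρ => ?_⟩
      · cases h with | fst h => exact .fst (iha.1 h hρ)
      · cases h with | up h => cases h with | fst h => exact .up (.fst (iha.1 h hρ))
  | snd a iha =>
      refine ⟨fun h hρ => ?_, fun h hρ => ?_⟩
      · cases h with | snd h => exact .snd (iha.1 h hρ)
      · cases h with | up h => cases h with | snd h => exact .up (.snd (iha.1 h hρ))
  | lam a iha =>
      refine ⟨fun h _ => ?_, fun h hρ => ?_⟩
      · cases h
      · cases h with
        | lam ha => exact .lam (iha.2 ha (goodRen_lift hρ _))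
        | up h => cases h
  | app a b iha ihb =>
      refine ⟨fun h hρ => ?_, fun h hρ => ?_⟩
      · cases h with | app h1 h2 => exact .app (iha.1 h1 hρ) (ihb.2 h2 hρ)
      · cases h with
        | up h => cases h with | app h1 h2 => exact .up (.app (iha.1 h1 hρ) (ihb.2 h2 hρ))
  | ret a iha =>
      refine ⟨fun h _ => ?_, fun h hρ => ?_⟩
      · cases h
      · cases h with
        | ret ha => exact .ret (iha.2 ha hρ)
        | up h => cases h
  | lett a b iha ihb =>
      refine ⟨fun h _ => ?_, fun h hρ => ?_⟩
      · cases h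
      · cases h with
        | lett ha hb => exact .lett (iha.1 ha hρ) (ihb.2 hb (goodRen_lift hρ _))
        | up h => cases h

lemma neu_rename {Γ Γ' : Ctx} {ρ : ℕ → ℕ} {t : Tm} {A : Ty}
    (h : Neu Γ t A) (hρ : GoodRen ρ Γ Γ') : Neu Γ' (rename ρ t) A :=
  (rename_neu_nf t).1 h hρ

lemma nf_rename {Γ Γ' : Ctx} {ρ : ℕ → ℕ} {t : Tm} {A : Ty}
    (h : Nf Γ t A) (hρ : GoodRen ρ Γ Γ') : Nf Γ' (rename ρ t) A :=
  (rename_neu_nf t).2 h hρ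

/-- Neutrals and normal forms are well typed. -/
lemma neu_nf_hasTy : ∀ t : Tm,
    (∀ {Γ : Ctx} {A : Ty}, Neu Γ t A → HasTy Γ t A) ∧
    (∀ {Γ : Ctx} {A : Ty}, Nf Γ t A → HasTy Γ t A) := by
  intro t
  induction t with
  | var n =>
      refine ⟨fun h => ?_, fun h => ?_⟩
      · cases h with | var hv => exact .var hv
      · cases h with | up h => cases h with | var hv => exact .var hv
  | unit =>
      refine ⟨fun h => ?_, fun h => ?_⟩
      · cases h
      · cases h with
        | unit => exact .unit
        | up h => cases h
  | pair a b iha ihb =>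
      refine ⟨fun h => ?_, fun h => ?_⟩
      · cases h
      · cases h with
        | pair ha hb => exact .pair (iha.2 ha) (ihb.2 hb)
        | up h => cases h
  | fst a iha =>
      refine ⟨fun h => ?_, fun h => ?_⟩
      · cases h with | fst h => exact .fst (iha.1 h)
      · cases h with | up h => cases h with | fst h => exact .fst (iha.1 h)
  | snd a iha =>
      refine ⟨fun h => ?_, fun h => ?_⟩
      · cases h with | snd h => exact .snd (iha.1 h)
      · cases h with | up h => cases h with | snd h => exact .snd (iha.1 h)
  | lam a iha =>
      refine ⟨fun h => ?_, fun h => ?_⟩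
      · cases h
      · cases h with
        | lam ha => exact .lam (iha.2 ha)
        | up h => cases h
  | app a b iha ihb =>
      refine ⟨fun h => ?_, fun h => ?_⟩
      · cases h with | app h1 h2 => exact .app (iha.1 h1) (ihb.2 h2)
      · cases h with
        | up h => cases h with | app h1 h2 => exact .app (iha.1 h1) (ihb.2 h2)
  | ret a iha =>
      refine ⟨fun h => ?_, fun h => ?_⟩
      · cases h
      · cases h with
        | ret ha => exact .ret (iha.2 ha)
        | up h => cases h
  | lett a b iha ihb =>
      refine ⟨fun h => ?_, fun h => ?_⟩
      · cases h
      · cases h with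
        | lett ha hb => exact .lett (iha.1 ha) (ihb.2 hb)
        | up h => cases h

lemma neu_hasTy {Γ : Ctx} {t : Tm} {A : Ty} (h : Neu Γ t A) : HasTy Γ t A :=
  (neu_nf_hasTy t).1 h

lemma nf_hasTy {Γ : Ctx} {t : Tm} {A : Ty} (h : Nf Γ t A) : HasTy Γ t A :=
  (neu_nf_hasTy t).2 h

/-- Inversion for normal forms at product type. -/
lemma nf_prod_inv {Γ : Ctx} {m : Tm} {A B : Ty} (h : Nf Γ m (.prod A B)) :
    ∃ a b, m = .pair a b ∧ Nf Γ a A ∧ Nf Γ b B := by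
  cases h with
  | pair ha hb => exact ⟨_, _, rfl, ha, hb⟩

lemma nf_arr_inv {Γ : Ctx} {m : Tm} {A B : Ty} (h : Nf Γ m (.arr A B)) :
    ∃ b, m = .lam b ∧ Nf (A :: Γ) b B := by
  cases h with
  | lam hb => exact ⟨_, rfl, hb⟩

lemma nf_dia_inv {Γ : Ctx} {m : Tm} {A : Ty} (h : Nf Γ m (.dia A)) :
    (∃ a, m = .ret a ∧ Nf Γ a A) ∨
    (∃ u v C, m = .lett u v ∧ Neu Γ u (.dia C) ∧ Nf (C :: Γ) v A) := by
  cases h with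
  | ret ha => exact Or.inl ⟨_, rfl, ha⟩
  | lett hu hv => exact Or.inr ⟨_, _, _, rfl, hu, hv⟩

/-- Reflection: every neutral term is equal to a normal form (η-expansion). -/
lemma reflect : ∀ (A : Ty) {Γ : Ctx} {t : Tm}, Neu Γ t A →
    ∃ m, Nf Γ m A ∧ EqTm Γ t m A := by
  intro A
  induction A with
  | base => exact fun h => ⟨_, .up h, .refl (neu_hasTy h)⟩
  | unit => exact fun h => ⟨.unit, .unit, .unit_eta (neu_hasTy h)⟩
  | prod A B ihA ihB =>
      intro Γ t h
      obtain ⟨a, ha, ea⟩ := ihA (Neu.fst h)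
      obtain ⟨b, hb, eb⟩ := ihB (Neu.snd h)
      exact ⟨_, .pair ha hb, .trans (.prod_eta (neu_hasTy h)) (.pair_congr ea eb)⟩
  | arr A B ihA ihB =>
      intro Γ t h
      obtain ⟨x, hx, ex⟩ := ihA (Neu.var (Γ := A :: Γ) (n := 0) rfl)
      have hw : Neu (A :: Γ) (rename Nat.succ t) (.arr A B) :=
        neu_rename h (goodRen_succ Γ A)
      obtain ⟨m, hm, em⟩ := ihB (Neu.app hw hx)
      refine ⟨.lam m, .lam hm, .trans (.arr_eta (neu_hasTy h)) (.lam_congr ?_)⟩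
      exact .trans (.app_congr (.refl (neu_hasTy hw)) ex) em
  | dia A ihA =>
      intro Γ t h
      obtain ⟨x, hx, ex⟩ := ihA (Neu.var (Γ := A :: Γ) (n := 0) rfl)
      exact ⟨.lett t x, .lett h hx,
        .trans (.dia_eta (neu_hasTy h)) (.lett_congr (.refl (neu_hasTy h)) ex)⟩

/-- Hereditary substitution: substituting a normal form into a neutral term yields
either a neutral term or collapses to a normal form of type no larger than the
substituted type; substituting into a normal form yields a normal form, in each
case provably equal to the syntactic substitution. -/
lemma hsubst (A' : Ty) (t : Tm) :
    ∀ {Γ : Ctx} {n : Tm}, Nf Γ n A' → ∀ (Δ : Ctx) (B : Ty),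
    ((Neu (Δ ++ A' :: Γ) t B →
       (∃ m, Neu (Δ ++ Γ) m B ∧ EqTm (Δ ++ Γ) (subst Δ.length n t) m B) ∨
       (∃ m, Nf (Δ ++ Γ) m B ∧ sizeOf B ≤ sizeOf A' ∧
          EqTm (Δ ++ Γ) (subst Δ.length n t) m B)) ∧
     (Nf (Δ ++ A' :: Γ) t B → ∃ m, Nf (Δ ++ Γ) m B ∧
          EqTm (Δ ++ Γ) (subst Δ.length n t) m B)) := by
  intro Γ n hn Δ
  have hneu : ∀ B, Neu (Δ ++ A' :: Γ) t B →
      (∃ m, Neu (Δ ++ Γ) m B ∧ EqTm (Δ ++ Γ) (subst Δ.length n t) m B) ∨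
      (∃ m, Nf (Δ ++ Γ) m B ∧ sizeOf B ≤ sizeOf A' ∧
        EqTm (Δ ++ Γ) (subst Δ.length n t) m B) := by
    intro B hne
    cases hne with
    | @var _ j _ hv =>
        by_cases hj : j < Δ.length
        · left
          have hl : (Δ ++ Γ)[j]? = some B := by
            rw [List.getElem?_append_left hj]; rw [List.getElem?_append_left hj] at hv; exact hv
          refine ⟨.var j, .var hl, ?_⟩
          simp only [subst, if_pos hj]
          exact .refl (.var hl)
        · by_cases hj2 : j = Δ.length
          · subst hj2
            have hv' : (Δ ++ A' :: Γ)[Δ.length]? = some A' := by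
              rw [List.getElem?_append_right (le_refl _), Nat.sub_self]; rfl
            rw [hv] at hv'
            obtain rfl : A' = B := (Option.some.inj hv').symm
            right
            have hm : Nf (Δ ++ Γ) (rename (· + Δ.length) n) A' :=
              nf_rename hn (goodRen_add Γ Δ)
            refine ⟨_, hm, le_refl _, ?_⟩
            simp only [subst, if_neg hj, if_pos rfl]
            exact .refl (nf_hasTy hm)
          · left
            have hj3 : Δ.length < j := by omega
            have hl : (Δ ++ Γ)[j - 1]? = some B := by
              rw [List.getElem?_append_right (by omega)]
              rw [List.getElem?_append_right (by omega)] at hv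
              obtain ⟨d, hd⟩ : ∃ d, j - Δ.length = d + 1 := ⟨j - Δ.length - 1, by omega⟩
              rw [hd] at hv
              have : j - 1 - Δ.length = d := by omega
              rw [this]
              exact hv
            refine ⟨.var (j - 1), .var hl, ?_⟩
            simp only [subst, if_neg hj, if_neg hj2]
            exact .refl (.var hl)
    | @fst _ t₀ _ B₂ h₀ =>
        rcases ((hsubst A' t₀ hn Δ (.prod B B₂)).1 h₀) with ⟨m, hm, em⟩ | ⟨m, hm, hsz, em⟩
        · exact Or.inl ⟨.fst m, .fst hm, by simp only [subst]; exact .fst_congr em⟩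
        · obtain ⟨a, b, rfl, ha, hb⟩ := nf_prod_inv hm
          right
          refine ⟨a, ha, ?_, ?_⟩
          · have := Ty.prod.sizeOf_spec B B₂; omega
          · simp only [subst]
            exact .trans (.fst_congr em) (.prod_beta1 (nf_hasTy ha) (nf_hasTy hb))
    | @snd _ t₀ B₁ _ h₀ =>
        rcases ((hsubst A' t₀ hn Δ (.prod B₁ B)).1 h₀) with ⟨m, hm, em⟩ | ⟨m, hm, hsz, em⟩
        · exact Or.inl ⟨.snd m, .snd hm, by simp only [subst]; exact .snd_congr em⟩
        · obtain ⟨a, b, rfl, ha, hb⟩ := nf_prod_inv hm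
          right
          refine ⟨b, hb, ?_, ?_⟩
          · have := Ty.prod.sizeOf_spec B₁ B; omega
          · simp only [subst]
            exact .trans (.snd_congr em) (.prod_beta2 (nf_hasTy ha) (nf_hasTy hb))
    | @app _ f u A _ hf hu =>
        obtain ⟨u'', hu'', eu⟩ := (hsubst A' u hn Δ A).2 hu
        rcases ((hsubst A' f hn Δ (.arr A B)).1 hf) with ⟨m, hm, em⟩ | ⟨m, hm, hsz, em⟩
        · exact Or.inl ⟨.app m u'', .app hm hu'', by
            simp only [subst]; exact .app_congr em eu⟩
        · obtain ⟨b, rfl, hb⟩ := nf_arr_inv hm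
          have hszA : sizeOf A < sizeOf A' := by
            have := Ty.arr.sizeOf_spec A B; omega
          obtain ⟨m', hm', em'⟩ := (hsubst A b hu'' [] B).2 hb
          right
          refine ⟨m', hm', ?_, ?_⟩
          · have := Ty.arr.sizeOf_spec A B; omega
          · simp only [subst]
            exact .trans (.app_congr em eu)
              (.trans (.arr_beta (nf_hasTy hb) (nf_hasTy hu'')) em')
  intro B
  refine ⟨hneu B, ?_⟩
  intro hnf
  cases hnf with
  | up h =>
      rcases hneu _ h with ⟨m, hm, em⟩ | ⟨m, hm, _, em⟩
      · exact ⟨m, .up hm, em⟩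
      · exact ⟨m, hm, em⟩
  | unit => exact ⟨.unit, .unit, by simp only [subst]; exact .refl .unit⟩
  | @pair _ a b A₁ B₁ ha hb =>
      obtain ⟨a', ha', ea⟩ := (hsubst A' a hn Δ A₁).2 ha
      obtain ⟨b', hb', eb⟩ := (hsubst A' b hn Δ B₁).2 hb
      exact ⟨.pair a' b', .pair ha' hb', by simp only [subst]; exact .pair_congr ea eb⟩
  | @lam _ b A₁ B₁ hb =>
      obtain ⟨m, hm, em⟩ := (hsubst A' b hn (A₁ :: Δ) B₁).2 hb
      exact ⟨.lam m, .lam hm, by simp only [subst]; exact .lam_congr em⟩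
  | @ret _ a A₁ ha =>
      obtain ⟨a', ha', ea⟩ := (hsubst A' a hn Δ A₁).2 ha
      exact ⟨.ret a', .ret ha', by simp only [subst]; exact .ret_congr ea⟩
  | @lett _ a body C B₀ hne hbody =>
      obtain ⟨mb, hmb, emb⟩ := (hsubst A' body hn (C :: Δ) B₀).2 hbody
      rcases ((hsubst A' a hn Δ (.dia C)).1 hne) with ⟨m, hm, em⟩ | ⟨q, hq, hsz, eq⟩
      · exact ⟨.lett m mb, .lett hm hmb, by simp only [subst]; exact .lett_congr em emb⟩
      · have hszC : sizeOf C < sizeOf A' := by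
          have := Ty.dia.sizeOf_spec C; omega
        rcases nf_dia_inv hq with ⟨q₀, rfl, hq₀⟩ | ⟨q₁, q₂, C₂, rfl, hq₁, hq₂⟩
        · obtain ⟨m', hm', em'⟩ := (hsubst C mb hq₀ [] B₀).2 hmb
          refine ⟨.ret m', .ret hm', ?_⟩
          simp only [subst]
          exact .trans (.lett_congr eq emb)
            (.trans (.dia_beta2 (nf_hasTy hq₀) (nf_hasTy hmb)) (.ret_congr em'))
        · have hmbw : Nf (C :: C₂ :: (Δ ++ Γ)) (rename (liftRen Nat.succ) mb) B₀ :=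
            nf_rename hmb (goodRen_lift (goodRen_succ _ C₂) C)
          obtain ⟨m', hm', em'⟩ := (hsubst C (rename (liftRen Nat.succ) mb) hq₂ [] B₀).2 hmbw
          refine ⟨.lett q₁ m', .lett hq₁ hm', ?_⟩
          simp only [subst]
          exact .trans (.lett_congr eq emb)
            (.trans (.dia_beta1 (neu_hasTy hq₁) (nf_hasTy hq₂) (nf_hasTy hmb))
              (.lett_congr (.refl (neu_hasTy hq₁)) em'))
termination_by (sizeOf A', sizeOf t)
decreasing_by
  all_goals first
    | decreasing_tactic
    | (simp_wf; apply Prod.Lex.left; omega)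

/-- STATEMENT 13: correctness of normalization for RLC: every well-typed term
`Γ ⊢ t : A` has a normal form `Γ ⊢nf n : A` with `Γ ⊢ t ≡ n : A`. -/
theorem normalization_correct_RLC {Γ : Ctx} {t : Tm} {A : Ty}
    (ht : HasTy Γ t A) : ∃ n : Tm, Nf Γ n A ∧ EqTm Γ t n A := by
  induction ht with
  | var hv => exact reflect _ (.var hv)
  | unit => exact ⟨.unit, .unit, .refl .unit⟩
  | pair _ _ ih1 ih2 =>
      obtain ⟨a, ha, ea⟩ := ih1
      obtain ⟨b, hb, eb⟩ := ih2
      exact ⟨.pair a b, .pair ha hb, .pair_congr ea eb⟩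
  | fst _ ih =>
      obtain ⟨m, hm, em⟩ := ih
      obtain ⟨a, b, rfl, ha, hb⟩ := nf_prod_inv hm
      exact ⟨a, ha, .trans (.fst_congr em) (.prod_beta1 (nf_hasTy ha) (nf_hasTy hb))⟩
  | snd _ ih =>
      obtain ⟨m, hm, em⟩ := ih
      obtain ⟨a, b, rfl, ha, hb⟩ := nf_prod_inv hm
      exact ⟨b, hb, .trans (.snd_congr em) (.prod_beta2 (nf_hasTy ha) (nf_hasTy hb))⟩
  | lam _ ih =>
      obtain ⟨m, hm, em⟩ := ih
      exact ⟨.lam m, .lam hm, .lam_congr em⟩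
  | @app Γ' f u A₀ B₀ _ _ ih1 ih2 =>
      obtain ⟨m, hm, em⟩ := ih1
      obtain ⟨u', hu', eu⟩ := ih2
      obtain ⟨b, rfl, hb⟩ := nf_arr_inv hm
      obtain ⟨m', hm', em'⟩ := (hsubst A₀ b hu' [] B₀).2 hb
      exact ⟨m', hm', .trans (.app_congr em eu)
        (.trans (.arr_beta (nf_hasTy hb) (nf_hasTy hu')) em')⟩
  | ret _ ih =>
      obtain ⟨m, hm, em⟩ := ih
      exact ⟨.ret m, .ret hm, .ret_congr em⟩
  | @lett Γ' a u A₀ B₀ _ _ ih1 ih2 =>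
      obtain ⟨q, hq, eq⟩ := ih1
      obtain ⟨u', hu', eu⟩ := ih2
      rcases nf_dia_inv hq with ⟨q₀, rfl, hq₀⟩ | ⟨q₁, q₂, C₂, rfl, hq₁, hq₂⟩
      · obtain ⟨m', hm', em'⟩ := (hsubst A₀ u' hq₀ [] B₀).2 hu'
        exact ⟨.ret m', .ret hm', .trans (.lett_congr eq eu)
          (.trans (.dia_beta2 (nf_hasTy hq₀) (nf_hasTy hu')) (.ret_congr em'))⟩
      · have hu'w : Nf (A₀ :: C₂ :: Γ') (rename (liftRen Nat.succ) u') B₀ :=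
          nf_rename hu' (goodRen_lift (goodRen_succ _ C₂) A₀)
        obtain ⟨m', hm', em'⟩ := (hsubst A₀ (rename (liftRen Nat.succ) u') hq₂ [] B₀).2 hu'w
        exact ⟨.lett q₁ m', .lett hq₁ hm', .trans (.lett_congr eq eu)
          (.trans (.dia_beta1 (neu_hasTy hq₁) (nf_hasTy hq₂) (nf_hasTy hu'))
            (.lett_congr (.refl (neu_hasTy hq₁)) em'))⟩
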